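/- arXiv:hep-th/9502068 — 5 statements merged into one kernel-verified Lean document; each statement's English description precedes it below -/
import Mathlib

section
/- The map ω on the sl(N) loop algebra L(sl(N)) = C[t,t⁻¹] ⊗ sl(N), defined on basis elements by ω(tⁿE_{ij}) = (-1)^{i+j+1+nN} t^{-n}E_{ji} and ω(tⁿH_i) = (-1)^{1+nN} t^{-n}H_i, is an involutive Lie algebra automorphism, i.e., ω is a Lie algebra homomorphism with ω² = id. -/
noncomputable section
open Matrix LaurentPolynomial
attribute [local instance] LieRing.ofAssociativeRing

/-- The (gl) loop algebra: matrices over Laurent polynomials. -/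
abbrev gl (N : ℕ) := Matrix (Fin N) (Fin N) (LaurentPolynomial ℂ)

/-- The traceless part: the `sl(N)` loop algebra, as a Lie subalgebra over ℂ. -/
def slC (N : ℕ) : LieSubalgebra ℂ (gl N) where
  carrier := {A | Matrix.trace A = 0}
  add_mem' := by
    intro a b ha hb
    simp only [Set.mem_setOf_eq] at *
    rw [Matrix.trace_add, ha, hb, add_zero]
  zero_mem' := by simp
  smul_mem' := by
    intro c A hA
    simp only [Set.mem_setOf_eq] at *
    rw [Matrix.trace_smul, hA, smul_zero]
  lie_mem' := by
    intro x y hx hy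
    simp only [Set.mem_setOf_eq] at *
    rw [Ring.lie_def, Matrix.trace_sub, Matrix.trace_mul_comm, sub_self]

/-- Basis element `tⁿ E_{ij}` (for `i ≠ j`) of the `sl(N)` loop algebra. -/
def TE (N : ℕ) (n : ℤ) (i j : Fin N) (h : i ≠ j) : slC N :=
  ⟨(T n : LaurentPolynomial ℂ) • Matrix.single i j (1 : LaurentPolynomial ℂ), by
    show Matrix.trace _ = 0
    rw [Matrix.trace_smul]
    first
      | erw [Matrix.trace_single_eq_of_ne h, smul_zero]
      | simp [Matrix.trace_single_eq_of_ne h]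
      | simp [Matrix.trace, Matrix.single_apply, h]⟩

/-- Basis element `tⁿ H_k = tⁿ (E_{kk} - E_{k+1,k+1})` of the `sl(N)` loop algebra. -/
def TH (N : ℕ) (n : ℤ) (k : Fin N) (hk : (k : ℕ) + 1 < N) : slC N :=
  ⟨(T n : LaurentPolynomial ℂ) • (Matrix.single k k (1 : LaurentPolynomial ℂ)
      - Matrix.single (⟨(k : ℕ) + 1, hk⟩ : Fin N) (⟨(k : ℕ) + 1, hk⟩ : Fin N) 1), by
    show Matrix.trace _ = 0
    rw [Matrix.trace_smul, Matrix.trace_sub, Matrix.trace_single_eq_same,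
      Matrix.trace_single_eq_same, sub_self, smul_zero]⟩



namespace OmegaAux

/-- Monoid hom sending `n` to `(-1)^(N*n) • T(-n)`. -/
def g (N : ℕ) : Multiplicative ℤ →* LaurentPolynomial ℂ where
  toFun n := ((-1 : ℂ) ^ ((Multiplicative.toAdd n) * (N : ℤ))) • T (-(Multiplicative.toAdd n))
  map_one' := by simp [T_zero]
  map_mul' a b := by
    simp only [toAdd_mul]
    rw [neg_add, T_add, add_mul, zpow_add₀ (by norm_num : (-1:ℂ) ≠ 0)]
    rw [smul_mul_smul_comm]

/-- The ℂ-algebra endomorphism of Laurent polynomials with `T n ↦ (-1)^(nN) T (-n)`. -/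
def φ (N : ℕ) : LaurentPolynomial ℂ →ₐ[ℂ] LaurentPolynomial ℂ :=
  AddMonoidAlgebra.lift ℂ _ ℤ (g N)

lemma φ_T (N : ℕ) (n : ℤ) : φ N (T n) = ((-1 : ℂ) ^ (n * (N : ℤ))) • T (-n) := by
  have : (T n : LaurentPolynomial ℂ) = AddMonoidAlgebra.single n 1 := rfl
  rw [this, φ, AddMonoidAlgebra.lift_single, one_smul]
  rfl

lemma φ_φ (N : ℕ) (x : LaurentPolynomial ℂ) : φ N (φ N x) = x := by
  induction x using LaurentPolynomial.induction_on' with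
  | add p q hp hq => rw [map_add, map_add, hp, hq]
  | C_mul_T n a =>
    rw [← smul_eq_C_mul, _root_.map_smul, _root_.map_smul, φ_T, _root_.map_smul, φ_T,
      smul_smul, smul_smul, mul_assoc, ← zpow_add₀ (by norm_num : (-1:ℂ) ≠ 0)]
    simp


variable (N : ℕ)

/-- Sign matrix `D = diag((-1)^i)`. -/
def D : gl N := Matrix.diagonal (fun i : Fin N => ((-1 : LaurentPolynomial ℂ)) ^ (i : ℕ))

lemma D_mul_D : D N * D N = 1 := by
  rw [D, Matrix.diagonal_mul_diagonal]
  convert Matrix.diagonal_one with i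
  rw [← pow_add, ← two_mul, pow_mul]
  norm_num

lemma D_transpose : (D N)ᵀ = D N := Matrix.diagonal_transpose _

lemma D_map_φ : (D N).map (φ N) = D N := by
  rw [D, Matrix.diagonal_map (map_zero _)]
  funext i
  simp

/-- The candidate automorphism on `gl N`. -/
def ωg (A : gl N) : gl N := -(D N * (Aᵀ.map (φ N)) * D N)

lemma ωg_apply (A : gl N) (a b : Fin N) :
    ωg N A a b = -((-1 : LaurentPolynomial ℂ) ^ (a : ℕ) * (-1) ^ (b : ℕ) * φ N (A b a)) := by
  rw [ωg, Matrix.neg_apply, D, Matrix.mul_diagonal, Matrix.diagonal_mul]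
  simp [Matrix.map_apply, mul_comm, mul_assoc, mul_left_comm]

lemma ωg_add (A B : gl N) : ωg N (A + B) = ωg N A + ωg N B := by
  apply Matrix.ext
  intro a b
  simp only [Matrix.add_apply, ωg_apply, map_add]
  ring

lemma ωg_smul (c : ℂ) (A : gl N) : ωg N (c • A) = c • ωg N A := by
  have h : (c • Aᵀ).map (φ N) = c • (Aᵀ.map (φ N)) := by
    ext a b
    simp [Matrix.map_apply, _root_.map_smul]
  rw [ωg, ωg, Matrix.transpose_smul, h, Matrix.mul_smul, Matrix.smul_mul, smul_neg]

lemma ωg_trace (A : gl N) (hA : Matrix.trace A = 0) : Matrix.trace (ωg N A) = 0 := by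
  rw [ωg, Matrix.trace_neg, Matrix.trace_mul_cycle, D_mul_D, Matrix.one_mul]
  have : Matrix.trace (Aᵀ.map (φ N)) = φ N (Matrix.trace Aᵀ) := by
    simp [Matrix.trace, Matrix.diag, Matrix.map_apply, map_sum]
  rw [this, Matrix.trace_transpose, hA, map_zero, neg_zero]

lemma ωg_lie (A B : gl N) : ωg N ⁅A, B⁆ = ⁅ωg N A, ωg N B⁆ := by
  have hD : ∀ X : gl N, D N * (D N * X) = X := fun X => by
    rw [← Matrix.mul_assoc, D_mul_D, Matrix.one_mul]
  have hmul : ∀ X Y : gl N, (X * Y).map (φ N) = X.map (φ N) * Y.map (φ N) := fun X Y => by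
    ext a b
    simp [Matrix.map_apply, Matrix.mul_apply, map_sum]
  have hsub : ∀ X Y : gl N, (X - Y).map (φ N) = X.map (φ N) - Y.map (φ N) := fun X Y => by
    ext a b
    simp [Matrix.map_apply]
  rw [Ring.lie_def, Ring.lie_def]
  rw [ωg, ωg, ωg, Matrix.transpose_sub, Matrix.transpose_mul, Matrix.transpose_mul,
    hsub, hmul, hmul]
  set X := Aᵀ.map (φ N)
  set Y := Bᵀ.map (φ N)
  rw [Matrix.neg_mul, Matrix.mul_neg, neg_neg, Matrix.neg_mul, Matrix.mul_neg, neg_neg]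
  rw [Matrix.mul_sub, Matrix.sub_mul, neg_sub]
  simp only [Matrix.mul_assoc, hD]

lemma ωg_ωg (A : gl N) : ωg N (ωg N A) = A := by
  have hmapmap : ∀ X : gl N, (X.map (φ N)).map (φ N) = X := fun X => by
    ext a b; simp [Matrix.map_apply, φ_φ]
  have hD : ∀ X : gl N, D N * (D N * X) = X := fun X => by
    rw [← Matrix.mul_assoc, D_mul_D, Matrix.one_mul]
  have hmul : ∀ X Y : gl N, (X * Y).map (φ N) = X.map (φ N) * Y.map (φ N) := fun X Y => by
    ext a b
    simp [Matrix.map_apply, Matrix.mul_apply, map_sum]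
  have hneg : ∀ X : gl N, (-X).map (φ N) = -(X.map (φ N)) := fun X => by
    ext a b
    simp [Matrix.map_apply]
  rw [ωg, ωg, Matrix.transpose_neg, Matrix.transpose_mul, Matrix.transpose_mul,
    D_transpose, Matrix.transpose_map, Matrix.transpose_transpose, hneg,
    hmul, hmul, D_map_φ, hmapmap]
  rw [Matrix.mul_neg, Matrix.neg_mul, neg_neg]
  simp only [Matrix.mul_assoc, hD]
  rw [D_mul_D, Matrix.mul_one]


lemma neg_one_pow_mul (k : ℕ) (x : LaurentPolynomial ℂ) :
    (-1 : LaurentPolynomial ℂ) ^ k * x = ((-1 : ℂ) ^ k) • x := by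
  rw [show ((-1 : LaurentPolynomial ℂ) = (-1 : ℂ) • (1 : LaurentPolynomial ℂ)) by simp,
    smul_pow, one_pow, smul_mul_assoc, one_mul]

lemma ωg_basis (n : ℤ) (i j : Fin N) :
    ωg N ((T n : LaurentPolynomial ℂ) • Matrix.single i j 1)
      = (-((-1 : ℂ) ^ ((i : ℕ) + (j : ℕ)) * (-1 : ℂ) ^ (n * (N : ℤ)))) •
          ((T (-n) : LaurentPolynomial ℂ) • Matrix.single j i 1) := by
  apply Matrix.ext
  intro a b
  rw [Matrix.smul_apply, Matrix.smul_apply, ωg_apply, Matrix.smul_apply, smul_eq_mul]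
  by_cases h1 : j = a ∧ i = b
  · obtain ⟨h1, h2⟩ := h1
    subst h1; subst h2
    simp only [Matrix.single, Matrix.of_apply, and_self, if_true, mul_one, smul_eq_mul]
    rw [← pow_add, neg_one_pow_mul, φ_T, smul_smul, ← neg_smul, add_comm (j : ℕ)]
  · simp only [Matrix.single, Matrix.of_apply]
    rw [if_neg (fun h => h1 ⟨h.2, h.1⟩), if_neg h1]
    simp

lemma ωg_sub (A B : gl N) : ωg N (A - B) = ωg N A - ωg N B := by
  apply Matrix.ext
  intro a b
  simp only [Matrix.sub_apply, ωg_apply, map_sub]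
  ring

/-- The involution as a linear map on `slC N`. -/
def ωsl : ↥(slC N) →ₗ[ℂ] ↥(slC N) where
  toFun x := ⟨ωg N x.1, ωg_trace N x.1 x.2⟩
  map_add' x y := Subtype.ext (ωg_add N x.1 y.1)
  map_smul' c x := Subtype.ext (ωg_smul N c x.1)

lemma ωsl_val (x : ↥(slC N)) : (ωsl N x : gl N) = ωg N x.1 := rfl

lemma slC_smul_val (c : ℂ) (x : ↥(slC N)) :
    ((c • x : ↥(slC N)) : gl N) = c • (x : gl N) := rfl

lemma TE_val (n : ℤ) (i j : Fin N) (h : i ≠ j) :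
    ((TE N n i j h : ↥(slC N)) : gl N) = (T n : LaurentPolynomial ℂ) • Matrix.single i j 1 := rfl

lemma TH_val (n : ℤ) (k : Fin N) (hk : (k : ℕ) + 1 < N) :
    ((TH N n k hk : ↥(slC N)) : gl N) = (T n : LaurentPolynomial ℂ) • (Matrix.single k k 1
      - Matrix.single (⟨(k : ℕ) + 1, hk⟩ : Fin N) ⟨(k : ℕ) + 1, hk⟩ 1) := rfl

end OmegaAux

/-- The map `ω` on the `sl(N)` loop algebra, defined on the basis elements
`tⁿE_{ij}` and `tⁿH_k` by `ω(tⁿE_{ij}) = (-1)^{i+j+1+nN} t^{-n}E_{ji}` and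
`ω(tⁿH_k) = (-1)^{1+nN} t^{-n}H_k`, is an involutive Lie algebra automorphism. -/
theorem omega_is_involutive_lie_automorphism (N : ℕ) (hN : 2 ≤ N) :
    ∃ ω : ↥(slC N) →ₗ[ℂ] ↥(slC N),
      (∀ (n : ℤ) (i j : Fin N) (h : i ≠ j),
        ω (TE N n i j h)
          = (((-1 : ℂ) ^ ((i : ℕ) + (j : ℕ) + 1)) * ((-1 : ℂ) ^ (n * (N : ℤ)))) •
              TE N (-n) j i h.symm) ∧
      (∀ (n : ℤ) (k : Fin N) (hk : (k : ℕ) + 1 < N),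
        ω (TH N n k hk) = (-((-1 : ℂ) ^ (n * (N : ℤ)))) • TH N (-n) k hk) ∧
      (∀ x y : ↥(slC N), ω ⁅x, y⁆ = ⁅ω x, ω y⁆) ∧
      (∀ x : ↥(slC N), ω (ω x) = x) := by
  refine ⟨OmegaAux.ωsl N, ?_, ?_, ?_, ?_⟩
  · intro n i j h
    refine Subtype.ext ?_
    rw [OmegaAux.ωsl_val, OmegaAux.slC_smul_val, OmegaAux.TE_val, OmegaAux.TE_val,
      OmegaAux.ωg_basis]
    congr 1
    rw [pow_succ]
    ring
  · intro n k hk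
    refine Subtype.ext ?_
    rw [OmegaAux.ωsl_val, OmegaAux.slC_smul_val, OmegaAux.TH_val, OmegaAux.TH_val, smul_sub,
      OmegaAux.ωg_sub, OmegaAux.ωg_basis, OmegaAux.ωg_basis, smul_sub, smul_sub]
    have e1 : ((-1 : ℂ)) ^ ((k : ℕ) + (k : ℕ)) = 1 := Even.neg_one_pow ⟨_, rfl⟩
    have e2 : ((-1 : ℂ)) ^ (((⟨(k : ℕ) + 1, hk⟩ : Fin N) : ℕ)
        + ((⟨(k : ℕ) + 1, hk⟩ : Fin N) : ℕ)) = 1 := Even.neg_one_pow ⟨_, rfl⟩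
    rw [e1, e2, one_mul]
  · intro x y
    refine Subtype.ext ?_
    rw [OmegaAux.ωsl_val, LieSubalgebra.coe_bracket, LieSubalgebra.coe_bracket,
      OmegaAux.ωsl_val, OmegaAux.ωsl_val]
    exact OmegaAux.ωg_lie N x.1 y.1
  · intro x
    refine Subtype.ext ?_
    rw [OmegaAux.ωsl_val, OmegaAux.ωsl_val]
    exact OmegaAux.ωg_ωg N x.1
end
end

section
/- In the sl(N) Onsager algebra A_N (N ≥ 4), [e_1, S_1(r)] = S_2(r-1) for 2 ≤ r ≤ N-1, where S_k(r) is the right-nested string commutator. -/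
noncomputable section

/-- The generalized Dolan–Grady relations for a cyclic family `e` of `N` elements. -/
def DolanGrady {N : ℕ} [NeZero N] {L : Type*} [LieRing L] (e : Fin N → L) : Prop :=
  (∀ i j : Fin N, (j = i + 1 ∨ i = j + 1) → ⁅e i, ⁅e i, e j⁆⁆ = e j) ∧
  (∀ i j : Fin N, i ≠ j → j ≠ i + 1 → i ≠ j + 1 → ⁅e i, e j⁆ = 0)

/-- The right-nested string `S_k(r) = [e_k,[e_{k+1},...,e_{k+r-1}]...]`, with `S _ 0 = 0`. -/
def S {N : ℕ} [NeZero N] {L : Type*} [LieRing L] (e : Fin N → L) : ℕ → Fin N → L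
  | 0, _ => 0
  | 1, k => e k
  | (r + 2), k => ⁅e k, S e (r + 1) (k + 1)⁆

open Fin.CommRing in
lemma e1_comm (N : ℕ) (hN : 4 ≤ N) [NeZero N] {L : Type*} [LieRing L]
    (e : Fin N → L) (hDG : DolanGrady e) (a : ℕ) (h3 : 3 ≤ a) (ha : a < N) :
    ⁅e (1 : Fin N), e ((a : ℕ) : Fin N)⁆ = 0 := by
  have hv : ((a : ℕ) : Fin N).val = a := Fin.val_cast_of_lt ha
  have h1 : ((1 : Fin N)).val = 1 := by
    have : (1 : ℕ) < N := by omega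
    simpa using Fin.val_cast_of_lt this
  apply hDG.2
  · intro h; rw [Fin.ext_iff, h1, hv] at h; omega
  · intro h
    have := congrArg Fin.val h
    rw [hv] at this
    have h2 : ((1 : Fin N) + 1).val = 2 := by
      rw [Fin.add_def, h1]
      simpa using Nat.mod_eq_of_lt (by omega : (2:ℕ) < N)
    omega
  · intro h
    have hval : (1 : Fin N).val = (((a : ℕ) : Fin N) + 1).val := congrArg Fin.val h
    rw [h1, Fin.add_def, hv, h1] at hval
    have hmod : 1 = (a + 1) % N := by simpa using hval
    rcases Nat.lt_or_ge (a + 1) N with hlt | hge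
    · rw [Nat.mod_eq_of_lt hlt] at hmod; omega
    · have heq : a + 1 = N := by omega
      rw [heq, Nat.mod_self] at hmod; omega

open Fin.CommRing in
lemma e1_S_comm (N : ℕ) (hN : 4 ≤ N) [NeZero N] {L : Type*} [LieRing L]
    (e : Fin N → L) (hDG : DolanGrady e) :
    ∀ m a : ℕ, 3 ≤ a → a + m ≤ N → ⁅e (1 : Fin N), S e m ((a : ℕ) : Fin N)⁆ = 0 := by
  intro m
  induction m using Nat.strong_induction_on with
  | _ m ih =>
    match m with
    | 0 => intro a _ _; simp [S]
    | 1 =>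
      intro a h3 hle
      simpa [S] using e1_comm N hN e hDG a h3 (by omega)
    | k + 2 =>
      intro a h3 hle
      have hcast : ((a : ℕ) : Fin N) + 1 = (((a + 1 : ℕ)) : Fin N) := by push_cast; ring
      rw [S, hcast, leibniz_lie]
      rw [e1_comm N hN e hDG a h3 (by omega), ih (k + 1) (by omega) (a + 1) (by omega) (by omega)]
      simp

/-- If `e_1,…,e_N` (`N ≥ 4`) satisfy the generalized Dolan–Grady relations,
then `[e_1, S_1(r)] = S_2(r-1)` for `2 ≤ r ≤ N - 1`. -/
theorem bracket_e1_string_at_one (N : ℕ) (hN : 4 ≤ N) [NeZero N]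
    {L : Type*} [LieRing L] [LieAlgebra ℂ L]
    (e : Fin N → L) (hDG : DolanGrady e)
    (r : ℕ) (hr2 : 2 ≤ r) (hr : r ≤ N - 1) :
    ⁅e (1 : Fin N), S e r (1 : Fin N)⁆ = S e (r - 1) (2 : Fin N) := by
  have h12 : (1 : Fin N) + 1 = (2 : Fin N) := by open Fin.CommRing in ring
  obtain ⟨s, rfl⟩ : ∃ s, r = s + 2 := ⟨r - 2, by omega⟩
  match s with
  | 0 =>
    show ⁅e (1 : Fin N), ⁅e 1, e ((1 : Fin N) + 1)⁆⁆ = e 2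
    rw [h12]
    exact hDG.1 1 2 (Or.inl h12.symm)
  | t + 1 =>
    open Fin.CommRing in
    have h23 : (2 : Fin N) + 1 = (((3 : ℕ)) : Fin N) := by push_cast; ring
    have hX : ⁅e (1 : Fin N), S e (t + 1) ((2 : Fin N) + 1)⁆ = 0 := by
      rw [h23]; exact e1_S_comm N hN e hDG (t + 1) 3 le_rfl (by omega)
    have h12' : ⁅e (1 : Fin N), e (2 : Fin N)⁆ = ⁅e (1 : Fin N), e (2 : Fin N)⁆ := rfl
    show ⁅e (1:Fin N), S e (t + 3) 1⁆ = S e (t + 2) 2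
    rw [show S e (t + 3) (1 : Fin N) = ⁅e 1, S e (t + 2) ((1:Fin N) + 1)⁆ from rfl, h12]
    rw [show S e (t + 2) (2 : Fin N) = ⁅e 2, S e (t + 1) ((2:Fin N) + 1)⁆ from rfl]
    rw [leibniz_lie (e (1:Fin N)) (e (2:Fin N)), hX, lie_zero, add_zero]
    rw [leibniz_lie, hX, lie_zero, add_zero]
    rw [hDG.1 1 2 (Or.inl h12.symm)]
end
end

section
/- In the sl(N) Onsager algebra A_N (N ≥ 4), for a string S_k(r) with k + r ≥ N + 3 and r ≤ N - 1, the commutator [e_1, S_k(r)] = 0. -/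
noncomputable section

open Fin.NatCast

/-- Key lemma: `[[a,b],[b,c]] = 0` (uses 2-divisibility via the `ℂ`-action). -/
lemma key_lemma {L : Type*} [LieRing L] [LieAlgebra ℂ L] (a b c : L)
    (h2 : ⁅b, ⁅b, a⁆⁆ = a) (h3 : ⁅b, ⁅b, c⁆⁆ = c) (h4 : ⁅a, c⁆ = 0) :
    ⁅⁅a, b⁆, ⁅b, c⁆⁆ = 0 := by
  have hba : ⁅b, a⁆ = -⁅a, b⁆ := (lie_skew b a).symm
  have hab : ⁅a, b⁆ = -⁅b, a⁆ := (lie_skew a b).symm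
  have hbab : ⁅b, ⁅a, b⁆⁆ = -a := by rw [hab, lie_neg, h2]
  have hv : ⁅⁅a, b⁆, c⁆ = ⁅a, ⁅b, c⁆⁆ := by
    rw [leibniz_lie a b c, h4, lie_zero, add_zero]
  have e1 : ⁅b, ⁅a, ⁅b, c⁆⁆⁆ = -⁅⁅a, b⁆, ⁅b, c⁆⁆ := by
    rw [leibniz_lie b a ⁅b, c⁆, h3, h4, add_zero, hba, neg_lie]
  have e2 : ⁅b, ⁅⁅a, b⁆, c⁆⁆ = ⁅⁅a, b⁆, ⁅b, c⁆⁆ := by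
    rw [leibniz_lie b ⁅a, b⁆ c, hbab, neg_lie, h4, neg_zero, zero_add]
  rw [hv] at e2
  have hXX : -⁅⁅a, b⁆, ⁅b, c⁆⁆ = ⁅⁅a, b⁆, ⁅b, c⁆⁆ := e1.symm.trans e2
  have hs : (2 : ℂ) • ⁅⁅a, b⁆, ⁅b, c⁆⁆ = 0 := by
    rw [two_smul]
    nth_rewrite 1 [← hXX]
    exact neg_add_cancel _
  have : ((2 : ℂ)⁻¹ * 2) • ⁅⁅a, b⁆, ⁅b, c⁆⁆ = 0 := by
    rw [mul_smul, hs, smul_zero]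
  simpa using this

/-- If `x` commutes with every generator appearing in a string, it commutes with the string. -/
lemma comm_S {N : ℕ} [NeZero N] {L : Type*} [LieRing L] (e : Fin N → L) (x : L) :
    ∀ (s : ℕ) (a : Fin N), (∀ i : ℕ, i < s → ⁅x, e (a + (i : Fin N))⁆ = 0) →
      ⁅x, S e s a⁆ = 0
  | 0, a, h => by simp [S]
  | 1, a, h => by simpa [S] using h 0 (by omega)
  | (r + 2), a, h => by
    have h0 : ⁅x, e a⁆ = 0 := by simpa using h 0 (by omega)
    have hrec : ⁅x, S e (r + 1) (a + 1)⁆ = 0 := by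
      apply comm_S e x (r + 1) (a + 1)
      intro i hi
      have := h (i + 1) (by omega)
      have hc : a + ((i + 1 : ℕ) : Fin N) = a + 1 + (i : Fin N) := by
        push_cast
        abel
      rwa [hc] at this
    show ⁅x, ⁅e a, S e (r + 1) (a + 1)⁆⁆ = 0
    rw [leibniz_lie, h0, hrec, zero_lie, lie_zero, add_zero]

section Aux

variable {N : ℕ} (hN : 4 ≤ N) [NeZero N] {L : Type*} [LieRing L] [LieAlgebra ℂ L]
  (e : Fin N → L) (hDG : DolanGrady e)

include hN hDG

lemma cast_ne_cast {a b : ℕ} (ha : a < N) (hb : b < N) (hab : a ≠ b) :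
    (a : Fin N) ≠ (b : Fin N) := by
  intro h
  apply hab
  have := congrArg Fin.val h
  rwa [Fin.val_natCast, Fin.val_natCast, Nat.mod_eq_of_lt ha, Nat.mod_eq_of_lt hb] at this

/-- `e_0` commutes with `e_j` for `2 ≤ j ≤ N-2`. -/
lemma comm0 {j : ℕ} (hj2 : 2 ≤ j) (hjN : j ≤ N - 2) : ⁅e 0, e (j : Fin N)⁆ = 0 := by
  have hjlt : j < N := by omega
  apply hDG.2
  · have := cast_ne_cast hN e hDG (a := 0) (b := j) (by omega) hjlt (by omega)
    simpa using this
  · have := cast_ne_cast hN e hDG (a := j) (b := 1) hjlt (by omega) (by omega)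
    simpa using this
  · have := cast_ne_cast hN e hDG (a := 0) (b := j + 1) (by omega) (by omega) (by omega)
    simpa [Nat.cast_add] using this

/-- `e_1` commutes with `e_j` for `3 ≤ j ≤ N-2`. -/
lemma comm1 {j : ℕ} (hj3 : 3 ≤ j) (hjN : j ≤ N - 2) : ⁅e 1, e (j : Fin N)⁆ = 0 := by
  have hjlt : j < N := by omega
  apply hDG.2
  · have := cast_ne_cast hN e hDG (a := 1) (b := j) (by omega) hjlt (by omega)
    simpa using this
  · have := cast_ne_cast hN e hDG (a := j) (b := 2) hjlt (by omega) (by omega)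
    simpa [← one_add_one_eq_two] using this
  · have := cast_ne_cast hN e hDG (a := 1) (b := j + 1) (by omega) (by omega) (by omega)
    simpa [Nat.cast_add] using this

/-- Base case: `[e_1, S_N(m)] = 0` for `3 ≤ m ≤ N-1` (index `N ≡ 0`). -/
lemma base_case (t : ℕ) (ht : t + 3 ≤ N - 1) : ⁅e 1, S e (t + 3) (0 : Fin N)⁆ = 0 := by
  -- DG relations among e_0, e_1, e_2
  have dg10 : ⁅e 1, ⁅e 1, e 0⁆⁆ = e 0 := hDG.1 1 0 (Or.inr (zero_add 1).symm)
  have dg12 : ⁅e 1, ⁅e 1, e 2⁆⁆ = e 2 := hDG.1 1 2 (Or.inl one_add_one_eq_two.symm)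
  have dg02 : ⁅e 0, e 2⁆ = 0 := by
    have := comm0 hN e hDG (j := 2) (by omega) (by omega)
    simpa using this
  have hkey : ⁅⁅e 0, e 1⁆, ⁅e 1, e 2⁆⁆ = 0 := key_lemma (e 0) (e 1) (e 2) dg10 dg12 dg02
  have h110 : ⁅e 1, ⁅e 0, e 1⁆⁆ = -(e 0) := by
    rw [show ⁅e 0, e 1⁆ = -⁅e 1, e 0⁆ from (lie_skew (e 0) (e 1)).symm, lie_neg, dg10]
  obtain _ | t' := t
  · -- t = 0 : the string is ⁅e 0, ⁅e 1, e 2⁆⁆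
    have hunfold : S e 3 (0 : Fin N) = ⁅e 0, ⁅e 1, e 2⁆⁆ := by
      show ⁅e 0, S e 2 ((0 : Fin N) + 1)⁆ = _
      rw [zero_add]
      congr 1
      show ⁅e 1, e ((1 : Fin N) + 1)⁆ = _
      rw [one_add_one_eq_two]
    rw [hunfold, leibniz_lie (e 1) (e 0) ⁅e 1, e 2⁆, dg12, dg02,
      show ⁅e 1, e 0⁆ = -⁅e 0, e 1⁆ from (lie_skew (e 1) (e 0)).symm, neg_lie, hkey,
      neg_zero, zero_add]
  · -- t = t' + 1 : the string is ⁅e 0, ⁅e 1, ⁅e 2, T⁆⁆⁆ with T = S_3(t'+1)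
    have h23 : (2 : Fin N) + 1 = ((3 : ℕ) : Fin N) := by push_cast; norm_num
    have hunfold : S e (t' + 4) (0 : Fin N) =
        ⁅e 0, ⁅e 1, ⁅e 2, S e (t' + 1) ((3 : ℕ) : Fin N)⁆⁆⁆ := by
      show ⁅e 0, S e (t' + 3) ((0 : Fin N) + 1)⁆ = _
      rw [zero_add]
      congr 1
      show ⁅e 1, S e (t' + 2) ((1 : Fin N) + 1)⁆ = _
      rw [one_add_one_eq_two]
      congr 1
      show ⁅e 2, S e (t' + 1) ((2 : Fin N) + 1)⁆ = _
      rw [h23]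
    set T := S e (t' + 1) ((3 : ℕ) : Fin N) with hTdef
    have hbT : ⁅e 1, T⁆ = 0 := by
      apply comm_S e (e 1) (t' + 1)
      intro i hi
      have hc : ((3 : ℕ) : Fin N) + (i : Fin N) = ((3 + i : ℕ) : Fin N) := by
        push_cast; ring
      rw [hc]
      exact comm1 hN e hDG (by omega) (by omega)
    have haT : ⁅e 0, T⁆ = 0 := by
      apply comm_S e (e 0) (t' + 1)
      intro i hi
      have hc : ((3 : ℕ) : Fin N) + (i : Fin N) = ((3 + i : ℕ) : Fin N) := by
        push_cast; ring
      rw [hc]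
      exact comm0 hN e hDG (by omega) (by omega)
    have step1 : ⁅e 1, ⁅e 2, T⁆⁆ = ⁅⁅e 1, e 2⁆, T⁆ := by
      rw [leibniz_lie (e 1) (e 2) T, hbT, lie_zero, add_zero]
    have h012 : ⁅e 0, ⁅e 1, e 2⁆⁆ = ⁅⁅e 0, e 1⁆, e 2⁆ := by
      rw [leibniz_lie (e 0) (e 1) (e 2), dg02, lie_zero, add_zero]
    have step2 : ⁅e 0, ⁅⁅e 1, e 2⁆, T⁆⁆ = ⁅⁅⁅e 0, e 1⁆, e 2⁆, T⁆ := by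
      rw [leibniz_lie (e 0) ⁅e 1, e 2⁆ T, haT, lie_zero, add_zero, h012]
    have step4 : ⁅e 1, ⁅⁅e 0, e 1⁆, e 2⁆⁆ = 0 := by
      rw [leibniz_lie (e 1) ⁅e 0, e 1⁆ (e 2), h110, neg_lie, dg02, neg_zero, zero_add, hkey]
    have hfin : ⁅e (1 : Fin N), ⁅e 0, ⁅e 1, ⁅e 2, T⁆⁆⁆⁆ = 0 := by
      calc ⁅e (1 : Fin N), ⁅e 0, ⁅e 1, ⁅e 2, T⁆⁆⁆⁆
          = ⁅e 1, ⁅⁅⁅e 0, e 1⁆, e 2⁆, T⁆⁆ := by rw [step1, step2]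
        _ = ⁅⁅e 1, ⁅⁅e 0, e 1⁆, e 2⁆⁆, T⁆ + ⁅⁅⁅e 0, e 1⁆, e 2⁆, ⁅e 1, T⁆⁆ :=
            leibniz_lie _ _ _
        _ = 0 := by rw [step4, hbT, zero_lie, lie_zero, add_zero]
    show ⁅e (1 : Fin N), S e (t' + 4) (0 : Fin N)⁆ = 0
    rw [hunfold]
    exact hfin

/-- Induction over `k`, peeling generators until the string starts at index `N ≡ 0`. -/
lemma aux_lemma : ∀ r k : ℕ, 4 ≤ k → k ≤ N → r ≤ N - 1 → N + 3 ≤ k + r →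
    ⁅e (1 : Fin N), S e r ((k : ℕ) : Fin N)⁆ = 0 := by
  intro r
  induction r with
  | zero => intro k _ hkN _ hkr; omega
  | succ n ih =>
    intro k hk4 hkN hr hkr
    rcases Nat.lt_or_ge k N with hklt | hkge
    · -- k < N : peel off e_k
      obtain ⟨m, rfl⟩ : ∃ m, n = m + 1 := ⟨n - 1, by omega⟩
      have hunfold : S e (m + 2) ((k : ℕ) : Fin N) =
          ⁅e ((k : ℕ) : Fin N), S e (m + 1) (((k + 1 : ℕ) : Fin N))⁆ := by
        show ⁅e ((k : ℕ) : Fin N), S e (m + 1) (((k : ℕ) : Fin N) + 1)⁆ = _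
        congr 2
        push_cast
        ring
      rw [hunfold]
      have h1k : ⁅e (1 : Fin N), e ((k : ℕ) : Fin N)⁆ = 0 := by
        apply hDG.2
        · have := cast_ne_cast hN e hDG (a := 1) (b := k) (by omega) hklt (by omega)
          simpa using this
        · have := cast_ne_cast hN e hDG (a := k) (b := 2) hklt (by omega) (by omega)
          simpa [← one_add_one_eq_two] using this
        · rcases Nat.lt_or_ge (k + 1) N with h | h
          · have := cast_ne_cast hN e hDG (a := 1) (b := k + 1) (by omega) h (by omega)
            simpa [Nat.cast_add] using this
          · -- k + 1 = N, so (k : Fin N) + 1 = 0 ≠ 1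
            have hkN' : k + 1 = N := by omega
            intro hcon
            have h2 : ((1 : ℕ) : Fin N) = ((k + 1 : ℕ) : Fin N) := by
              push_cast
              simpa using hcon
            rw [hkN'] at h2
            have h3 := congrArg Fin.val h2
            rw [Fin.val_natCast, Fin.val_natCast, Nat.mod_eq_of_lt (by omega),
              Nat.mod_self] at h3
            omega
      have hrec : ⁅e (1 : Fin N), S e (m + 1) (((k + 1 : ℕ) : Fin N))⁆ = 0 :=
        ih (k + 1) (by omega) (by omega) (by omega) (by omega)
      rw [leibniz_lie, h1k, hrec, zero_lie, lie_zero, add_zero]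
    · -- k = N : base case at index 0
      have hkeq : k = N := by omega
      have hcast : ((k : ℕ) : Fin N) = (0 : Fin N) := by
        rw [hkeq]
        simp
      obtain ⟨t, ht⟩ : ∃ t, n = t + 2 := ⟨n - 2, by omega⟩
      subst ht
      rw [hcast]
      show ⁅e (1 : Fin N), S e (t + 3) (0 : Fin N)⁆ = 0
      exact base_case hN e hDG t (by omega)

end Aux

/-- If `e_1,…,e_N` (`N ≥ 4`) satisfy the generalized Dolan–Grady relations,
then for a string `S_k(r)` with `1 ≤ k ≤ N`, `1 ≤ r ≤ N - 1` and `k + r ≥ N + 3`, one has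
`[e_1, S_k(r)] = 0`. -/
theorem bracket_e1_string_wrap_zero (N : ℕ) (hN : 4 ≤ N) [NeZero N]
    {L : Type*} [LieRing L] [LieAlgebra ℂ L]
    (e : Fin N → L) (hDG : DolanGrady e)
    (k r : ℕ) (hk1 : 1 ≤ k) (hkN : k ≤ N) (hr1 : 1 ≤ r) (hr : r ≤ N - 1)
    (hkr : N + 3 ≤ k + r) :
    ⁅e (1 : Fin N), S e r (Fin.ofNat N (k : ℕ))⁆ = 0 :=
  aux_lemma hN e hDG r k (by omega) hkN hr hkr
end
end

section
/- In the sl(N) Onsager algebra A_N (N ≥ 4), [e_1, S_1(N)] = -2 S_1(N+1), where S_k(r) is the right-nested string commutator. -/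
noncomputable section

open Fin.NatCast Fin.CommRing

/-- Auxiliary nested bracket: `nest e r m x = [e_m,[e_{m+1},...,[e_{m+r-1}, x]]]`. -/
def nest {N : ℕ} [NeZero N] {L : Type*} [LieRing L] (e : Fin N → L) : ℕ → Fin N → L → L
  | 0, _, x => x
  | (r+1), m, x => ⁅e m, nest e r (m+1) x⁆

section Aux

variable {N : ℕ} [NeZero N] {L : Type*} [LieRing L] (e : Fin N → L)

lemma nest_neg : ∀ (r : ℕ) (m : Fin N) (x : L), nest e r m (-x) = - nest e r m x
  | 0, _, _ => rfl
  | (r+1), m, x => by rw [nest, nest, nest_neg, lie_neg]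

lemma cast_succ_shift (m : Fin N) (r : ℕ) :
    m + ((r+1 : ℕ) : Fin N) = m + 1 + (r : Fin N) := by
  push_cast
  ring

lemma nest_bottom : ∀ (r : ℕ) (m : Fin N) (x : L),
    nest e (r+1) m x = nest e r m ⁅e (m + (r : Fin N)), x⁆
  | 0, m, x => by simp [nest]
  | (r+1), m, x => by
      rw [nest, nest_bottom r (m+1) x, nest, ← cast_succ_shift]

lemma S_eq_nest : ∀ (r : ℕ) (k : Fin N), S e (r+1) k = nest e r k (e (k + (r : Fin N)))
  | 0, k => by simp [S, nest]
  | (r+1), k => by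
      rw [S, S_eq_nest r (k+1), nest, ← cast_succ_shift]

lemma bracket_nest (a : Fin N) : ∀ (r : ℕ) (m : Fin N) (x : L),
    (∀ i : ℕ, i < r → ⁅e a, e (m + (i : Fin N))⁆ = 0) →
    ⁅e a, nest e r m x⁆ = nest e r m ⁅e a, x⁆
  | 0, _, _, _ => rfl
  | (r+1), m, x, h => by
      have h0 : ⁅e a, e m⁆ = 0 := by simpa using h 0 (Nat.succ_pos r)
      rw [nest, leibniz_lie, h0, zero_lie, zero_add, nest,
        bracket_nest a r (m+1) x (fun i hi => by
          have hx := h (i+1) (by omega)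
          rwa [cast_succ_shift] at hx)]

end Aux

/-- If `e_1,…,e_N` (`N ≥ 4`) satisfy the generalized Dolan–Grady relations,
then `[e_1, S_1(N)] = -2 S_1(N+1)`. -/
theorem bracket_e1_closed_string_one (N : ℕ) (hN : 4 ≤ N) [NeZero N]
    {L : Type*} [LieRing L] [LieAlgebra ℂ L]
    (e : Fin N → L) (hDG : DolanGrady e) :
    ⁅e (1 : Fin N), S e N (1 : Fin N)⁆ = (-2 : ℂ) • S e (N + 1) (1 : Fin N) := by
  obtain ⟨M, rfl⟩ := Nat.exists_eq_add_of_le' hN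
  -- basic numeral identities in `Fin (M+4)`
  have e12 : (1 : Fin (M+4)) + 1 = 2 := by
    apply Fin.ext
    rw [Fin.val_add, Fin.val_one, Fin.coe_ofNat_eq_mod,
      Nat.mod_eq_of_lt (show 2 < M+4 by omega)]
  have e23 : (2 : Fin (M+4)) + 1 = 3 := by
    apply Fin.ext
    rw [Fin.val_add, Fin.val_one, Fin.coe_ofNat_eq_mod, Fin.coe_ofNat_eq_mod,
      Nat.mod_eq_of_lt (show 2 < M+4 by omega), Nat.mod_eq_of_lt (show 3 < M+4 by omega)]
  have e01 : (1 : Fin (M+4)) = 0 + 1 := by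
    rw [zero_add]
  -- the value of `3 + i` in `Fin (M+4)` for `i ≤ M`
  have val3i : ∀ i : ℕ, i < M + 1 → ((3 : Fin (M+4)) + (i : Fin (M+4))).val = 3 + i := by
    intro i hi
    rw [Fin.val_add, Fin.val_natCast, Fin.coe_ofNat_eq_mod,
      Nat.mod_eq_of_lt (show i < M+4 by omega),
      Nat.mod_eq_of_lt (show 3 < M+4 by omega),
      Nat.mod_eq_of_lt (show 3 + i < M+4 by omega)]
  -- commutation of `e 1` with `e 3, …, e (M+3)`
  have hcomm : ∀ i : ℕ, i < M + 1 → ⁅e 1, e ((3 : Fin (M+4)) + (i : Fin (M+4)))⁆ = 0 := by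
    intro i hi
    apply hDG.2
    · intro hc
      have := congrArg Fin.val hc
      rw [val3i i hi, Fin.val_one] at this
      omega
    · intro hc
      rw [e12] at hc
      have := congrArg Fin.val hc
      rw [val3i i hi, Fin.coe_ofNat_eq_mod, Nat.mod_eq_of_lt (show 2 < M+4 by omega)] at this
      omega
    · intro hc
      have := congrArg Fin.val hc
      rw [Fin.val_add, val3i i hi, Fin.val_one] at this
      rcases Nat.lt_or_ge (3 + i + 1) (M+4) with h' | h'
      · rw [Nat.mod_eq_of_lt h'] at this
        omega
      · rw [show 3 + i + 1 = M + 4 by omega, Nat.mod_self] at this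
        omega
  have h110 : ⁅e 1, ⁅e 1, e 0⁆⁆ = e 0 := hDG.1 1 0 (Or.inr e01)
  have h112 : ⁅e 1, ⁅e 1, e 2⁆⁆ = e 2 := hDG.1 1 2 (Or.inl e12.symm)
  have hAV : ⁅e 1, nest e (M+1) 3 (e 0)⁆ = nest e (M+1) 3 ⁅e 1, e 0⁆ :=
    bracket_nest e 1 (M+1) 3 _ hcomm
  have hAW : ⁅e 1, nest e (M+1) 3 ⁅e 1, e 0⁆⁆ = nest e (M+1) 3 (e 0) := by
    rw [bracket_nest e 1 (M+1) 3 _ hcomm, h110]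
  -- identify S e (M+4) 1
  have hSN : S e (M+4) 1 = ⁅e 1, ⁅e 2, nest e (M+1) 3 (e 0)⁆⁆ := by
    have h1 : S e (M+3+1) 1 = nest e (M+3) 1 (e (1 + ((M+3 : ℕ) : Fin (M+4)))) :=
      S_eq_nest e (M+3) 1
    have h2 : (1 : Fin (M+4)) + ((M+3 : ℕ) : Fin (M+4)) = 0 := by
      rw [show (1 : Fin (M+4)) = ((1:ℕ) : Fin (M+4)) by rw [Nat.cast_one], ← Nat.cast_add,
        show 1 + (M+3) = M+4 by omega, Fin.natCast_self]
    have h3 : nest e (M+3) (1 : Fin (M+4)) (e 0)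
        = ⁅e 1, ⁅e (1+1), nest e (M+1) (1+1+1) (e 0)⁆⁆ := rfl
    rw [h2, h3, e12, e23] at h1
    exact h1
  -- identify S e (M+5) 1
  have hSN1 : S e (M+4+1) 1 = ⁅e 1, ⁅e 2, -nest e (M+1) 3 ⁅e 1, e 0⁆⁆⁆ := by
    have h1 : S e (M+4+1) 1 = nest e (M+4) 1 (e (1 + ((M+4 : ℕ) : Fin (M+4)))) :=
      S_eq_nest e (M+4) 1
    have h2 : (1 : Fin (M+4)) + ((M+4 : ℕ) : Fin (M+4)) = 1 := by
      rw [Fin.natCast_self, add_zero]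
    have h3 : nest e (M+4) (1 : Fin (M+4)) (e 1)
        = ⁅e 1, ⁅e (1+1), nest e (M+2) (1+1+1) (e 1)⁆⁆ := rfl
    have h4 : (3 : Fin (M+4)) + ((M+1 : ℕ) : Fin (M+4)) = 0 := by
      rw [show (3 : Fin (M+4)) = ((3:ℕ) : Fin (M+4)) by norm_cast, ← Nat.cast_add,
        show 3 + (M+1) = M+4 by omega, Fin.natCast_self]
    rw [h2, h3, e12, e23, show M+2 = (M+1)+1 from rfl, nest_bottom, h4,
      show ⁅e (0 : Fin (M+4)), e 1⁆ = -⁅e 1, e 0⁆ by rw [← lie_skew], nest_neg] at h1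
    exact h1
  -- Leibniz expansions
  have E1 : ⁅e 1, ⁅e 2, nest e (M+1) 3 (e 0)⁆⁆
      = ⁅⁅e 1, e 2⁆, nest e (M+1) 3 (e 0)⁆ + ⁅e 2, nest e (M+1) 3 ⁅e 1, e 0⁆⁆ := by
    rw [leibniz_lie, hAV]
  have E2 : ⁅e 1, ⁅e 2, nest e (M+1) 3 ⁅e 1, e 0⁆⁆⁆
      = ⁅⁅e 1, e 2⁆, nest e (M+1) 3 ⁅e 1, e 0⁆⁆ + ⁅e 2, nest e (M+1) 3 (e 0)⁆ := by
    rw [leibniz_lie, hAW]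
  have E3 : ⁅e 1, ⁅⁅e 1, e 2⁆, nest e (M+1) 3 (e 0)⁆⁆
      = ⁅e 2, nest e (M+1) 3 (e 0)⁆ + ⁅⁅e 1, e 2⁆, nest e (M+1) 3 ⁅e 1, e 0⁆⁆ := by
    rw [leibniz_lie (e 1) ⁅e 1, e 2⁆ (nest e (M+1) 3 (e 0)), h112, hAV]
  calc ⁅e 1, S e (M+4) 1⁆
      = ⁅e 1, ⁅⁅e 1, e 2⁆, nest e (M+1) 3 (e 0)⁆ + ⁅e 2, nest e (M+1) 3 ⁅e 1, e 0⁆⁆⁆ := by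
        rw [hSN, E1]
    _ = (⁅e 2, nest e (M+1) 3 (e 0)⁆ + ⁅⁅e 1, e 2⁆, nest e (M+1) 3 ⁅e 1, e 0⁆⁆)
        + (⁅⁅e 1, e 2⁆, nest e (M+1) 3 ⁅e 1, e 0⁆⁆ + ⁅e 2, nest e (M+1) 3 (e 0)⁆) := by
        rw [lie_add, E3, E2]
    _ = (-2 : ℂ) • S e (M+4+1) 1 := by
        rw [hSN1, lie_neg, lie_neg, E2]
        module
end
end

section
/- In the sl(N) Onsager algebra A_N (N ≥ 3), the cyclic sum of the length-N strings vanishes: S_1(N) + S_2(N) + ... + S_N(N) = 0, i.e., Σ_{k=1}^N [e_k,[e_{k+1},...,e_{k+N-1}]...] = 0. -/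
noncomputable section

open Fin.NatCast


section Aux

open Fin.CommRing

variable {N : ℕ} [NeZero N] {L : Type*} [LieRing L] (e : Fin N → L)

lemma natCast_ne_fin {x y : ℕ} (h1 : x < y) (h2 : y < x + N) :
    (x : Fin N) ≠ (y : Fin N) := by
  intro h
  have hmod : x % N = y % N := by
    have := congrArg Fin.val h
    simpa [Fin.val_natCast] using this
  have hdvd : N ∣ y - x := (Nat.modEq_iff_dvd' h1.le).mp hmod
  have := Nat.le_of_dvd (by omega) hdvd
  omega

lemma comm_aux (hDG : DolanGrady e) (p : Fin N) {a b : ℕ} (h1 : a + 2 ≤ b)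
    (h2 : b + 2 ≤ a + N) :
    ⁅e (p + (a : Fin N)), e (p + (b : Fin N))⁆ = 0 := by
  apply hDG.2
  · intro h
    have h' : (a : Fin N) = (b : Fin N) := add_left_cancel h
    exact natCast_ne_fin (by omega) (by omega) h'
  · intro h
    have h' : ((a + 1 : ℕ) : Fin N) = (b : Fin N) := by
      push_cast
      have := add_left_cancel (h.trans (add_assoc p (a : Fin N) 1))
      linear_combination -this
    exact natCast_ne_fin (x := a + 1) (y := b) (by omega) (by omega) h'
  · intro h
    have h' : (a : Fin N) = ((b + 1 : ℕ) : Fin N) := by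
      push_cast
      have := add_left_cancel (h.trans (add_assoc p (b : Fin N) 1))
      linear_combination this
    exact natCast_ne_fin (x := a) (y := b + 1) (by omega) (by omega) h'

lemma comm_aux' (hDG : DolanGrady e) (p : Fin N) {a b : ℕ} (h1 : a + 2 ≤ b)
    (h2 : b + 2 ≤ a + N) :
    ⁅e (p + (b : Fin N)), e (p + (a : Fin N))⁆ = 0 := by
  rw [← lie_skew, comm_aux e hDG p h1 h2, neg_zero]

lemma S_succ (m : ℕ) (hm : 1 ≤ m) (k : Fin N) :
    S e (m + 1) k = ⁅e k, S e m (k + 1)⁆ := by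
  match m, hm with
  | (m' + 1), _ => rfl

lemma lie_S_zero (x : L) : ∀ (r : ℕ) (k : Fin N),
    (∀ i : ℕ, i < r → ⁅x, e (k + (i : Fin N))⁆ = 0) → ⁅x, S e r k⁆ = 0
  | 0, k, _ => by simp [S]
  | 1, k, h => by simpa [S] using h 0 (by omega)
  | (r + 2), k, h => by
    rw [show (S e (r + 2) k : L) = ⁅e k, S e (r + 1) (k + 1)⁆ from rfl, leibniz_lie]
    have h0 : ⁅x, e k⁆ = 0 := by simpa using h 0 (by omega)
    have h1 : ⁅x, S e (r + 1) (k + 1)⁆ = 0 := by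
      apply lie_S_zero x (r + 1) (k + 1)
      intro i hi
      have harg : (k + 1) + (i : Fin N) = k + ((i + 1 : ℕ) : Fin N) := by push_cast; ring
      rw [harg]; exact h (i + 1) (by omega)
    rw [h0, h1, zero_lie, lie_zero, add_zero]

lemma lie_end (hDG : DolanGrady e) : ∀ (b : ℕ) (k : Fin N), 1 ≤ b → b + 2 ≤ N →
    ⁅e (k + (b : Fin N)), S e b k⁆ = -S e (b + 1) k
  | 0, k, hb, _ => by omega
  | 1, k, _, hN => by
    rw [show (S e 1 k : L) = e k from rfl, Nat.cast_one,
      show (S e 2 k : L) = ⁅e k, S e 1 (k + 1)⁆ from rfl,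
      show (S e 1 (k + 1) : L) = e (k + 1) from rfl, ← lie_skew]
  | (n + 2), k, _, hN => by
    rw [show (S e (n + 2) k : L) = ⁅e k, S e (n + 1) (k + 1)⁆ from rfl, leibniz_lie]
    have hc : ⁅e (k + ((n + 2 : ℕ) : Fin N)), e k⁆ = 0 := by
      have := comm_aux' e hDG k (a := 0) (b := n + 2) (by omega) (by omega)
      simpa using this
    have harg : k + ((n + 2 : ℕ) : Fin N) = (k + 1) + ((n + 1 : ℕ) : Fin N) := by
      push_cast; ring
    have hrec : ⁅e (k + ((n + 2 : ℕ) : Fin N)), S e (n + 1) (k + 1)⁆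
        = -S e (n + 2) (k + 1) := by
      rw [harg]; exact lie_end hDG (n + 1) (k + 1) (by omega) (by omega)
    rw [hc, hrec, zero_lie, zero_add, lie_neg, ← S_succ e (n + 2) (by omega) k]

lemma chunk (hDG : DolanGrady e) : ∀ (a b : ℕ) (k : Fin N), 1 ≤ a → 1 ≤ b →
    a + b + 1 ≤ N → ⁅S e a k, S e b (k + (a : Fin N))⁆ = S e (a + b) k
  | 0, b, k, ha, _, _ => by omega
  | 1, b, k, _, hb, hab => by
    rw [show (S e 1 k : L) = e k from rfl, Nat.cast_one, ← S_succ e b hb k,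
      Nat.add_comm 1 b]
  | (n + 2), b, k, _, hb, hab => by
    rw [show (S e (n + 2) k : L) = ⁅e k, S e (n + 1) (k + 1)⁆ from rfl]
    have hB : k + ((n + 2 : ℕ) : Fin N) = (k + 1) + ((n + 1 : ℕ) : Fin N) := by
      push_cast; ring
    rw [hB, lie_lie]
    have hzero : ⁅e k, S e b ((k + 1) + ((n + 1 : ℕ) : Fin N))⁆ = 0 := by
      apply lie_S_zero
      intro i hi
      have harg : ((k + 1) + ((n + 1 : ℕ) : Fin N)) + (i : Fin N)
          = k + ((n + 2 + i : ℕ) : Fin N) := by push_cast; ring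
      rw [harg]
      have := comm_aux e hDG k (a := 0) (b := n + 2 + i) (by omega) (by omega)
      simpa using this
    rw [hzero, lie_zero, sub_zero, chunk hDG (n + 1) b (k + 1) (by omega) hb (by omega),
      ← S_succ e (n + 1 + b) (by omega) k]
    have : n + 1 + b + 1 = n + 2 + b := by omega
    rw [this]

lemma G_step (hDG : DolanGrady e) (r s : ℕ) (hr : 1 ≤ r) (hs : 1 ≤ s)
    (hrs : r + s + 1 = N) (k : Fin N) :
    ⁅S e (r + 1) k, S e s (k + ((r + 1 : ℕ) : Fin N))⁆
      = S e N k + ⁅S e r (k + 1), S e (s + 1) ((k + 1) + ((r : ℕ) : Fin N))⁆ := by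
  have hS : S e (r + 1) k = ⁅e k, S e r (k + 1)⁆ := S_succ e r hr k
  have hB : k + ((r + 1 : ℕ) : Fin N) = (k + 1) + ((r : ℕ) : Fin N) := by push_cast; ring
  rw [hS, hB, lie_lie]
  have hchunk : ⁅S e r (k + 1), S e s ((k + 1) + ((r : ℕ) : Fin N))⁆
      = S e (r + s) (k + 1) := chunk e hDG r s (k + 1) hr hs (by omega)
  have hcast : ((r : ℕ) : Fin N) + ((s : ℕ) : Fin N) + 1 = 0 := by
    have h : ((r + s + 1 : ℕ) : Fin N) = 0 := by rw [hrs]; exact Fin.natCast_self N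
    push_cast at h
    linear_combination h
  have hend : ⁅e k, S e s ((k + 1) + ((r : ℕ) : Fin N))⁆
      = -S e (s + 1) ((k + 1) + ((r : ℕ) : Fin N)) := by
    have hk : e k = e (((k + 1) + ((r : ℕ) : Fin N)) + ((s : ℕ) : Fin N)) := by
      congr 1
      linear_combination -hcast
    rw [hk]
    exact lie_end e hDG s _ hs (by omega)
  rw [hchunk, hend, lie_neg, sub_neg_eq_add]
  congr 1
  rw [← S_succ e (r + s) (by omega) k, hrs]

lemma sum_shift (f : Fin N → L) (c : Fin N) :
    ∑ k : Fin N, f (k + c) = ∑ k : Fin N, f k :=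
  Fintype.sum_equiv (Equiv.addRight c) _ _ (fun _ => rfl)

lemma sum_G (hDG : DolanGrady e) : ∀ (r s : ℕ), 1 ≤ r → 1 ≤ s → r + s = N →
    ∑ k : Fin N, ⁅S e r k, S e s (k + ((r : ℕ) : Fin N))⁆ = r • ∑ k : Fin N, S e N k
  | 0, s, hr, _, _ => by omega
  | 1, s, _, hs, hrs => by
    have hpt : ∀ k : Fin N, ⁅S e 1 k, S e s (k + ((1 : ℕ) : Fin N))⁆ = S e N k := by
      intro k
      rw [show (S e 1 k : L) = e k from rfl, Nat.cast_one, ← S_succ e s hs k,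
        show s + 1 = N by omega]
    rw [Finset.sum_congr rfl (fun k _ => hpt k), one_smul]
  | (n + 2), s, _, hs, hrs => by
    have hstep : ∀ k : Fin N, ⁅S e (n + 2) k, S e s (k + ((n + 2 : ℕ) : Fin N))⁆
        = S e N k + ⁅S e (n + 1) (k + 1), S e (s + 1) ((k + 1) + ((n + 1 : ℕ) : Fin N))⁆ :=
      fun k => G_step e hDG (n + 1) s (by omega) hs (by omega) k
    rw [Finset.sum_congr rfl (fun k _ => hstep k), Finset.sum_add_distrib,
      sum_shift (fun k => ⁅S e (n + 1) k, S e (s + 1) (k + ((n + 1 : ℕ) : Fin N))⁆) 1,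
      sum_G hDG (n + 1) (s + 1) (by omega) (by omega) (by omega)]
    have hsm : ((n + 2) • (∑ k : Fin N, S e N k) : L)
        = (n + 1) • (∑ k : Fin N, S e N k) + ∑ k : Fin N, S e N k := succ_nsmul _ _
    rw [hsm, add_comm]

end Aux

/-- If `e_1,…,e_N` (`N ≥ 3`) satisfy the generalized Dolan–Grady relations,
then the cyclic sum of the length-`N` strings vanishes: `S_1(N) + S_2(N) + ⋯ + S_N(N) = 0`. -/
theorem cyclic_sum_of_closed_strings_vanishes (N : ℕ) (hN : 3 ≤ N) [NeZero N]
    {L : Type*} [LieRing L] [LieAlgebra ℂ L]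
    (e : Fin N → L) (hDG : DolanGrady e) :
    ∑ k ∈ Finset.range N, S e N (((k + 1 : ℕ) : Fin N)) = 0 := by
  obtain ⟨M, rfl⟩ : ∃ M, N = M + 3 := ⟨N - 3, by omega⟩
  set T : L := ∑ k : Fin (M + 3), S e (M + 3) k with hT
  -- first: reduce the goal to T = 0
  have hgoal : ∑ k ∈ Finset.range (M + 3), S e (M + 3) (((k + 1 : ℕ) : Fin (M + 3))) = T := by
    rw [← Fin.sum_univ_eq_sum_range (fun k => S e (M + 3) (((k + 1 : ℕ) : Fin (M + 3)))) (M + 3)]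
    have hpt : ∀ i : Fin (M + 3),
        S e (M + 3) ((((i : ℕ) + 1 : ℕ)) : Fin (M + 3)) = S e (M + 3) (i + 1) := by
      intro i
      congr 1
    rw [Finset.sum_congr rfl (fun i _ => hpt i)]
    exact sum_shift (fun k => S e (M + 3) k) 1
  rw [hgoal]
  -- key identity
  have h1 : ∑ k : Fin (M + 3), ⁅S e 1 k, S e (M + 2) (k + ((1 : ℕ) : Fin (M + 3)))⁆ = 1 • T :=
    sum_G e hDG 1 (M + 2) (by omega) (by omega) (by omega)
  have h2 : ∑ k : Fin (M + 3), ⁅S e (M + 2) k, S e 1 (k + ((M + 2 : ℕ) : Fin (M + 3)))⁆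
      = (M + 2) • T :=
    sum_G e hDG (M + 2) 1 (by omega) (by omega) (by omega)
  have hc1 : ((M + 2 : ℕ) : Fin (M + 3)) + 1 = 0 := by
    have h : ((M + 3 : ℕ) : Fin (M + 3)) = 0 := Fin.natCast_self (M + 3)
    push_cast at h ⊢
    open Fin.CommRing in linear_combination h
  have h3 : ∑ k : Fin (M + 3), ⁅S e (M + 2) k, S e 1 (k + ((M + 2 : ℕ) : Fin (M + 3)))⁆
      = -∑ k : Fin (M + 3), ⁅S e 1 k, S e (M + 2) (k + ((1 : ℕ) : Fin (M + 3)))⁆ := by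
    rw [← Finset.sum_neg_distrib]
    rw [← sum_shift (fun k => -⁅S e 1 k, S e (M + 2) (k + ((1 : ℕ) : Fin (M + 3)))⁆)
      ((M + 2 : ℕ) : Fin (M + 3))]
    apply Finset.sum_congr rfl
    intro k _
    have e1 : k + ((M + 2 : ℕ) : Fin (M + 3)) + ((1 : ℕ) : Fin (M + 3)) = k := by
      rw [Nat.cast_one]
      open Fin.CommRing in linear_combination hc1
    rw [e1, ← lie_skew]
  have hNT : (M + 3) • T = 0 := by
    have h : (M + 2) • T + T = 0 := by
      rw [← h2, h3, h1, one_smul, neg_add_cancel]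
    rw [succ_nsmul]
    exact h
  have hCT : ((M + 3 : ℕ) : ℂ) • T = 0 := by
    rw [Nat.cast_smul_eq_nsmul]
    exact hNT
  have hNc : ((M + 3 : ℕ) : ℂ) ≠ 0 := by
    simp only [ne_eq, Nat.cast_eq_zero]
    omega
  calc T = ((M + 3 : ℕ) : ℂ)⁻¹ • (((M + 3 : ℕ) : ℂ) • T) := by
        rw [smul_smul, inv_mul_cancel₀ hNc, one_smul]
    _ = 0 := by rw [hCT, smul_zero]
end
end
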